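/- For the near-group fusion ring C_3 + 1 (rank 4, with basis 1, g, g², x where g has order 3, g·x = x·g = x, and x² = 1 + g + g² + x), the formal codegrees are (13+√13)/2, (13-√13)/2, 3, 3, and the ratio ((13+√13)/2)/3 = (13+√13)/6 is not an algebraic integer; hence by the Drinfeld-center criterion this fusion ring admits no complex categorification. -/

import Mathlib

open Polynomial Matrix

lemma det_fin_four' {R : Type*} [CommRing R] (M : Matrix (Fin 4) (Fin 4) R) :
    M.det =
      M 0 0 * (M 1 1 * (M 2 2 * M 3 3 - M 2 3 * M 3 2) - M 1 2 * (M 2 1 * M 3 3 - M 2 3 * M 3 1) + M 1 3 * (M 2 1 * M 3 2 - M 2 2 * M 3 1))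
    - M 0 1 * (M 1 0 * (M 2 2 * M 3 3 - M 2 3 * M 3 2) - M 1 2 * (M 2 0 * M 3 3 - M 2 3 * M 3 0) + M 1 3 * (M 2 0 * M 3 2 - M 2 2 * M 3 0))
    + M 0 2 * (M 1 0 * (M 2 1 * M 3 3 - M 2 3 * M 3 1) - M 1 1 * (M 2 0 * M 3 3 - M 2 3 * M 3 0) + M 1 3 * (M 2 0 * M 3 1 - M 2 1 * M 3 0))
    - M 0 3 * (M 1 0 * (M 2 1 * M 3 2 - M 2 2 * M 3 1) - M 1 1 * (M 2 0 * M 3 2 - M 2 2 * M 3 0) + M 1 2 * (M 2 0 * M 3 1 - M 2 1 * M 3 0)) := by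
  rw [Matrix.det_succ_row_zero, Fin.sum_univ_four]
  simp [Matrix.det_fin_three, Fin.succAbove, Matrix.submatrix_apply, Fin.sum_univ_succ]
  norm_num [show (Fin.succ 2 : Fin 4) = 3 from rfl, show (Fin.castSucc 2 : Fin 4) = 2 from rfl,
    show ¬((2:Fin 4) < 2) from by decide, show ((2:Fin 4) < 3) from by decide,
    show (((3:Fin 4)):ℕ) = 3 from rfl]
  ring

lemma charmatrix_explicit :
    charmatrix ((!![4,1,1,1;1,4,1,1;1,1,4,1;1,1,1,7] : Matrix (Fin 4) (Fin 4) ℝ))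
    = !![X - C 4, -C 1, -C 1, -C 1; -C 1, X - C 4, -C 1, -C 1;
         -C 1, -C 1, X - C 4, -C 1; -C 1, -C 1, -C 1, X - C 7] := by
  refine Matrix.ext fun i j => ?_
  fin_cases i <;> fin_cases j <;>
    simp [charmatrix_apply, Matrix.one_apply, Matrix.vecHead, Matrix.vecTail]

lemma charpoly_explicit :
    ((!![4,1,1,1;1,4,1,1;1,1,4,1;1,1,1,7] : Matrix (Fin 4) (Fin 4) ℝ)).charpoly
    = (X ^ 2 - 13 * X + 39) * (X - 3) ^ 2 := by
  rw [Matrix.charpoly, charmatrix_explicit, det_fin_four']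
  simp [Matrix.vecHead, Matrix.vecTail, map_ofNat]
  ring

lemma aux_not_integral : ¬ IsIntegral ℤ ((13 + Real.sqrt 13) / 6 : ℝ) := by
  intro h
  set s := Real.sqrt 13 with hsdef
  have hs2 : s ^ 2 = 13 := Real.sq_sqrt (by norm_num)
  set α : ℝ := (13 + s) / 6 with hαdef
  have hirr : Irrational α := by
    have h1 : Irrational s := by
      have := Nat.Prime.irrational_sqrt (p := 13) (by norm_num)
      simpa [hsdef] using this
    have := (h1.ratCast_add 13).div_natCast (m := 6) (by norm_num)
    simpa [hαdef] using this
  have hQ : IsIntegral ℚ α := h.tower_top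
  set p : ℚ[X] := X ^ 2 - C (13/3) * X + C (13/3) with hp
  have hpd : p.natDegree = 2 := by rw [hp]; compute_degree!
  have hpm : p.Monic := by
    unfold Polynomial.Monic Polynomial.leadingCoeff
    rw [hpd, hp]
    simp [coeff_one, coeff_X]
  have hroot : (Polynomial.aeval α) p = 0 := by
    rw [hp]
    simp [hαdef]
    field_simp
    nlinarith [hs2]
  have hdvd : minpoly ℚ α ∣ p := minpoly.dvd ℚ α hroot
  have hqm : (minpoly ℚ α).Monic := minpoly.monic hQ
  have h1' : (minpoly ℚ α).natDegree ≠ 1 := by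
    intro h1
    have hdeg1 : (minpoly ℚ α).degree = (1:ℕ) :=
      (Polynomial.degree_eq_iff_natDegree_eq hqm.ne_zero).mpr h1
    obtain ⟨q, hq⟩ := minpoly.degree_eq_one_iff.mp (by exact_mod_cast hdeg1)
    exact hirr ⟨q, hq⟩
  have hpos := minpoly.natDegree_pos hQ
  have hle : (minpoly ℚ α).natDegree ≤ 2 := hpd ▸ Polynomial.natDegree_le_of_dvd hdvd hpm.ne_zero
  have heq : minpoly ℚ α = p :=
    Polynomial.eq_of_dvd_of_natDegree_le_of_leadingCoeff hdvd (by omega)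
      (hqm.leadingCoeff.trans hpm.leadingCoeff.symm)
  have hmap := minpoly.isIntegrallyClosed_eq_field_fractions' ℚ h
  have hc1 : p.coeff 1 = -(13/3 : ℚ) := by
    rw [hp]; simp [coeff_X, coeff_one]
  rw [heq] at hmap
  have : p.coeff 1 = ((minpoly ℤ α).coeff 1 : ℚ) := by
    rw [hmap]; simp
  rw [hc1] at this
  have h3 : (3 : ℚ) * ((minpoly ℤ α).coeff 1 : ℚ) = -13 := by rw [← this]; ring
  have h3' : (3 : ℤ) * (minpoly ℤ α).coeff 1 = -13 := by exact_mod_cast h3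
  omega

/-- For the near-group fusion ring C₃ + 1 (basis 1, g, g², x), the formal codegrees
(eigenvalues of A = Σᵢ Xᵢ Xᵢᵀ) are (13±√13)/2 and 3 (multiplicity 2), i.e. the
characteristic polynomial of A is (x² - 13x + 39)(x - 3)², and the ratio
((13+√13)/2)/3 = (13+√13)/6 is not an algebraic integer (Drinfeld center criterion
obstruction to complex categorification). -/
theorem nearGroup_C3_plus_1_not_categorifiable :
    let X₁ : Matrix (Fin 4) (Fin 4) ℝ := 1
    let Xg : Matrix (Fin 4) (Fin 4) ℝ :=
      !![0,0,1,0; 1,0,0,0; 0,1,0,0; 0,0,0,1]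
    let Xg2 : Matrix (Fin 4) (Fin 4) ℝ :=
      !![0,1,0,0; 0,0,1,0; 1,0,0,0; 0,0,0,1]
    let Xx : Matrix (Fin 4) (Fin 4) ℝ :=
      !![0,0,0,1; 0,0,0,1; 0,0,0,1; 1,1,1,1]
    let A := X₁ * X₁ᵀ + Xg * Xgᵀ + Xg2 * Xg2ᵀ + Xx * Xxᵀ
    A.charpoly = (X ^ 2 - 13 * X + 39) * (X - 3) ^ 2 ∧
      ((13 + Real.sqrt 13) / 2) / 3 = (13 + Real.sqrt 13) / 6 ∧
      ¬ IsIntegral ℤ ((13 + Real.sqrt 13) / 6) := by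
  intro X₁ Xg Xg2 Xx A
  have hA : A = !![4,1,1,1;1,4,1,1;1,1,4,1;1,1,1,7] := by
    refine Matrix.ext fun i j => ?_
    fin_cases i <;> fin_cases j <;>
      simp [A, X₁, Xg, Xg2, Xx, Matrix.mul_apply, Fin.sum_univ_four, Matrix.one_apply,
        Matrix.transpose_apply, Matrix.vecHead, Matrix.vecTail, Matrix.vecMul, dotProduct] <;> norm_num
  refine ⟨by rw [hA]; exact charpoly_explicit, by ring, aux_not_integral⟩
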